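/- Region of influence as the derivative of the integrated activation time (Eq. (A.3)): let (Ω, μ) be a measure space with μ finite, and let a, c : Ω → ℝ be integrable. Define F : ℝ → ℝ by F(s) = ∫_Ω min(s + a(x), c(x)) dμ(x). If s₀ ∈ ℝ satisfies μ({x : s₀ + a(x) = c(x)}) = 0, then F is differentiable at s₀ with derivative μ({x : s₀ + a(x) < c(x)}). -/

import Mathlib

open MeasureTheory

/-- Region of influence as the derivative of the integrated activation time
(Eq. (A.3)): let `(Ω, μ)` be a measure space with `μ` finite, and let
`a, c : Ω → ℝ` be integrable. Define `F(s) = ∫ min (s + a x) (c x) dμ`. If `s₀`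
satisfies `μ {x | s₀ + a x = c x} = 0`, then `F` is differentiable at `s₀` with
derivative `μ {x | s₀ + a x < c x}`. -/
theorem hasDerivAt_integral_min_roi {Ω : Type*} [MeasurableSpace Ω]
    (μ : Measure Ω) [IsFiniteMeasure μ]
    (a c : Ω → ℝ) (ha : Integrable a μ) (hc : Integrable c μ)
    (F : ℝ → ℝ) (hF : ∀ s, F s = ∫ x, min (s + a x) (c x) ∂μ)
    (s₀ : ℝ) (htie : μ {x | s₀ + a x = c x} = 0) :
    HasDerivAt F (μ {x | s₀ + a x < c x}).toReal s₀ := by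
  obtain ⟨a', ha'sm, haa'⟩ := ha.1
  obtain ⟨c', hc'sm, hcc'⟩ := hc.1
  set S : Set Ω := {x | s₀ + a' x < c' x} with hS_def
  have hS : MeasurableSet S := by
    exact measurableSet_lt ((measurable_const.add ha'sm.measurable)) hc'sm.measurable
  have hSeq : {x | s₀ + a x < c x} =ᵐ[μ] S := by
    rw [Filter.eventuallyEq_set]
    filter_upwards [haa', hcc'] with x h1 h2
    simp [hS_def, h1, h2]
  have hμeq : μ {x | s₀ + a x < c x} = μ S := measure_congr hSeq
  set F' : Ω → ℝ := S.indicator (fun _ => (1 : ℝ)) with hF'_def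
  have hF'meas : AEStronglyMeasurable F' μ :=
    (stronglyMeasurable_const.indicator hS).aestronglyMeasurable
  have key :
      HasDerivAt (fun s => ∫ x, min (s + a x) (c x) ∂μ) (∫ x, F' x ∂μ) s₀ := by
    have hF_meas : ∀ᶠ s in nhds s₀,
        AEStronglyMeasurable (fun x => min (s + a x) (c x)) μ := by
      filter_upwards with s
      exact (aestronglyMeasurable_const.add ha.1).inf hc.1
    have hF_int : Integrable (fun x => min (s₀ + a x) (c x)) μ :=
      ((integrable_const s₀).add ha).inf hc
    have h_lip : ∀ᵐ x ∂μ, LipschitzOnWith (Real.nnabs 1)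
        (fun s => min (s + a x) (c x)) (Metric.ball s₀ 1) := by
      filter_upwards with x
      have : LipschitzWith 1 (fun s : ℝ => min (s + a x) (c x)) := by
        have h1 : LipschitzWith 1 (fun s : ℝ => s + a x) :=
          LipschitzWith.of_dist_le_mul (fun p q => by simp [Real.dist_eq])
        have h2 : LipschitzWith 1 (fun _ : ℝ => c x) :=
          (LipschitzWith.const (c x)).weaken zero_le_one
        simpa using h1.min h2
      simpa using this.lipschitzOnWith (s := Metric.ball s₀ 1)
    have h_diff : ∀ᵐ x ∂μ, HasDerivAt (fun s => min (s + a x) (c x)) (F' x) s₀ := by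
      have hne : ∀ᵐ x ∂μ, s₀ + a x ≠ c x := by
        rw [MeasureTheory.ae_iff]
        simpa using htie
      filter_upwards [hne, haa', hcc'] with x hx h1 h2
      rcases lt_or_gt_of_ne hx with h | h
      · have hx' : F' x = 1 := by
          have : x ∈ S := by simp [hS_def, ← h1, ← h2, h]
          simp [hF'_def, Set.indicator_of_mem this]
        rw [hx']
        have heq : (fun s => min (s + a x) (c x)) =ᶠ[nhds s₀] (fun s => s + a x) := by
          have hcont : Continuous (fun s : ℝ => s + a x) := by continuity
          filter_upwards [hcont.continuousAt.preimage_mem_nhds (Iio_mem_nhds h)] with s hs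
          exact min_eq_left (le_of_lt hs)
        exact (((hasDerivAt_id s₀).add_const (a x))).congr_of_eventuallyEq heq
      · have hx' : F' x = 0 := by
          have : x ∉ S := by simp [hS_def, ← h1, ← h2]; linarith
          simp [hF'_def, Set.indicator_of_notMem this]
        rw [hx']
        have heq : (fun s => min (s + a x) (c x)) =ᶠ[nhds s₀] (fun _ => c x) := by
          have hcont : Continuous (fun s : ℝ => s + a x) := by continuity
          filter_upwards [hcont.continuousAt.preimage_mem_nhds (Ioi_mem_nhds h)] with s hs
          exact min_eq_right (le_of_lt hs)
        exact (hasDerivAt_const s₀ (c x)).congr_of_eventuallyEq heq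
    exact (hasDerivAt_integral_of_dominated_loc_of_lip (bound := fun _ => (1:ℝ)) (Metric.ball_mem_nhds s₀ one_pos)
      hF_meas hF_int hF'meas h_lip (integrable_const 1) h_diff).2
  have hint : ∫ x, F' x ∂μ = (μ {x | s₀ + a x < c x}).toReal := by
    rw [hF'_def, hμeq]
    simp [integral_indicator_const, hS, measureReal_def]
  have hFeq : F = fun s => ∫ x, min (s + a x) (c x) ∂μ := funext hF
  rw [hFeq, ← hint]
  exact key
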